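/- For 1-bit sign compression with scaling, defining C[x] = (‖x‖₁/d) · sign(x) for x ∈ ℝ^d (with sign applied elementwise and sign(0)=1, say), the compression error satisfies ‖x - C[x]‖² = ‖x‖² - ‖x‖₁²/d, which is at most ‖x‖²(1 - 1/d); in particular ‖x - C[x]‖ ≤ ‖x‖. -/

import Mathlib

/-- The 1-bit sign compressor `C[x] = (‖x‖₁/d)·sign(x)` has compression error
`‖x - C[x]‖² = ‖x‖² - ‖x‖₁²/d ≤ ‖x‖²(1 - 1/d)`, hence `‖x - C[x]‖ ≤ ‖x‖`. -/
theorem one_bit_compression_error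
    (d : ℕ) (hd : 0 < d) (x s : EuclideanSpace ℝ (Fin d))
    (hs : ∀ i, s i = 1 ∨ s i = -1) (hsx : ∀ i, s i * x i = |x i|) :
    ‖x - ((∑ i, |x i|) / (d : ℝ)) • s‖ ^ 2 = ‖x‖ ^ 2 - (∑ i, |x i|) ^ 2 / (d : ℝ)
      ∧ ‖x - ((∑ i, |x i|) / (d : ℝ)) • s‖ ^ 2 ≤ ‖x‖ ^ 2 * (1 - 1 / (d : ℝ))
      ∧ ‖x - ((∑ i, |x i|) / (d : ℝ)) • s‖ ≤ ‖x‖ := by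
  have hd0 : (d : ℝ) ≠ 0 := Nat.cast_ne_zero.mpr hd.ne'
  have hdpos : (0:ℝ) < d := Nat.cast_pos.mpr hd
  set L : ℝ := ∑ i, |x i| with hL
  have hinner : (inner ℝ x s : ℝ) = L := by
    rw [PiLp.inner_apply]
    simp only [RCLike.inner_apply, conj_trivial]
    exact Finset.sum_congr rfl fun i _ => by rw [hsx i]
  have hs2 : ‖s‖ ^ 2 = (d : ℝ) := by
    rw [EuclideanSpace.norm_eq, Real.sq_sqrt (Finset.sum_nonneg fun i _ => sq_nonneg _)]
    have : ∀ i : Fin d, ‖s i‖ ^ 2 = 1 := by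
      intro i; rcases hs i with h | h <;> simp [h]
    calc ∑ i, ‖s i‖ ^ 2 = ∑ _i : Fin d, (1:ℝ) := Finset.sum_congr rfl fun i _ => this i
      _ = d := by simp
  have hx2 : ‖x‖ ^ 2 = ∑ i, (x i) ^ 2 := by
    rw [EuclideanSpace.norm_eq, Real.sq_sqrt (Finset.sum_nonneg fun i _ => sq_nonneg _)]
    simp [Real.norm_eq_abs, sq_abs]
  have key : ‖x - (L / (d : ℝ)) • s‖ ^ 2 = ‖x‖ ^ 2 - L ^ 2 / (d : ℝ) := by
    rw [norm_sub_sq_real, inner_smul_right, hinner, norm_smul]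
    rw [mul_pow, hs2]
    have : ‖L / (d:ℝ)‖ ^ 2 = (L / d) ^ 2 := by rw [Real.norm_eq_abs, sq_abs]
    rw [this]
    field_simp
    ring
  refine ⟨key, ?_, ?_⟩
  · have hLge : ‖x‖ ^ 2 ≤ L ^ 2 := by
      rw [hx2]
      calc ∑ i, (x i) ^ 2 = ∑ i, |x i| ^ 2 := by simp [sq_abs]
        _ ≤ (∑ i, |x i|) ^ 2 :=
          Finset.sum_sq_le_sq_sum_of_nonneg (fun i _ => abs_nonneg _)
    rw [key]
    have h2 : ‖x‖ ^ 2 / d ≤ L ^ 2 / d := by gcongr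
    rw [mul_sub, mul_one, mul_one_div]
    linarith
  · have h1 : ‖x - (L / (d : ℝ)) • s‖ ^ 2 ≤ ‖x‖ ^ 2 := by
      rw [key]
      have : 0 ≤ L ^ 2 / d := div_nonneg (sq_nonneg _) hdpos.le
      linarith
    nlinarith [norm_nonneg (x - (L / (d : ℝ)) • s), norm_nonneg x]
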